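/- Let γ ∈ ℂ \ 2ℤ and define f : ℤ≥0 → ℂ by the recurrence γ f_n = 2n (f_{n+1} − f_n)(f_n − f_{n−1})/(f_{n+1} − f_{n−1}) for n ≥ 1, with f_0 = 0 and f_1 = 1. Then f_{2l} = (2l/(2l+γ)) ∏_{k=1}^{l} (2k+γ)/(2k−γ) and f_{2l+1} = ∏_{k=1}^{l} (2k+γ)/(2k−γ). -/

import Mathlib

open Finset

/-- The discrete power function on the boundary row `m = 0`: the recurrence
`γ f_n = 2n (f_{n+1} - f_n)(f_n - f_{n-1})/(f_{n+1} - f_{n-1})` with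
`f_0 = 0`, `f_1 = 1` has the explicit solution
`f_{2l} = (2l/(2l+γ)) ∏_{k=1}^{l} (2k+γ)/(2k-γ)` and
`f_{2l+1} = ∏_{k=1}^{l} (2k+γ)/(2k-γ)`. -/
theorem discrete_power_boundary_formula
    (γ : ℂ) (hγ : ∀ k : ℤ, γ ≠ 2 * k)
    (f : ℕ → ℂ) (h0 : f 0 = 0) (h1 : f 1 = 1)
    (hden : ∀ n : ℕ, 1 ≤ n → f (n + 1) - f (n - 1) ≠ 0)
    (hrec : ∀ n : ℕ, 1 ≤ n →
      γ * f n = 2 * n * ((f (n + 1) - f n) * (f n - f (n - 1))) / (f (n + 1) - f (n - 1))) :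
    ∀ l : ℕ,
      f (2 * l) = (2 * l / (2 * l + γ)) * ∏ k ∈ Icc 1 l, (2 * (k : ℂ) + γ) / (2 * k - γ) ∧
      f (2 * l + 1) = ∏ k ∈ Icc 1 l, (2 * (k : ℂ) + γ) / (2 * k - γ) := by
  have key : ∀ n : ℕ, 1 ≤ n →
      f (n+1) * (γ * f n - 2*(n:ℂ)*(f n - f (n-1)))
        = f n * (γ * f (n-1) - 2*(n:ℂ)*(f n - f (n-1))) := by
    intro n hn
    have h := hrec n hn
    have hd := hden n hn
    field_simp at h
    linear_combination h
  have step : ∀ (a b c : ℂ) (n : ℕ), 1 ≤ n → f (n-1) = a → f n = b →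
      (γ * b - 2*(n:ℂ)*(b-a)) ≠ 0 →
      c * (γ * b - 2*(n:ℂ)*(b-a)) = b * (γ * a - 2*(n:ℂ)*(b-a)) →
      f (n+1) = c := by
    intro a b c n hn hfa hfb hne hc
    have k := key n hn
    rw [hfa, hfb] at k
    exact mul_right_cancel₀ hne (k.trans hc.symm)
  have hγ0 : γ ≠ 0 := by simpa using hγ 0
  have hplus : ∀ k : ℕ, 2*(k:ℂ) + γ ≠ 0 := by
    intro k h
    apply hγ (-(k:ℤ))
    push_cast
    linear_combination h
  have hminus : ∀ k : ℕ, 2*(k:ℂ) - γ ≠ 0 := by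
    intro k h
    apply hγ (k:ℤ)
    push_cast
    linear_combination -h
  intro l
  induction l with
  | zero => simp [h0, h1]
  | succ l ih =>
    obtain ⟨ha, hb⟩ := ih
    set P := ∏ k ∈ Icc 1 l, (2*(k:ℂ)+γ)/(2*(k:ℂ)-γ) with hP
    have hPne : P ≠ 0 := by
      refine Finset.prod_ne_zero_iff.mpr fun k _ => ?_
      exact div_ne_zero (hplus k) (hminus k)
    have h2l : (2*(l:ℂ)+γ) ≠ 0 := hplus l
    have h2l2p : (2*(l:ℂ)+2+γ) ≠ 0 := by
      have := hplus (l+1); push_cast at this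
      intro h; exact this (by linear_combination h)
    have h2l2m : (2*(l:ℂ)+2-γ) ≠ 0 := by
      have := hminus (l+1); push_cast at this
      intro h; exact this (by linear_combination h)
    have hg2l2 : γ - (2*(l:ℂ)+2) ≠ 0 := by
      intro h; exact h2l2m (by linear_combination -h)
    -- step 1 : n = 2l+1
    have hf2 : f (2*l+2) = (2*(l:ℂ)+2)/(2*(l:ℂ)+2-γ) * P := by
      have := step (2*(l:ℂ)/(2*l+γ) * P) P ((2*(l:ℂ)+2)/(2*(l:ℂ)+2-γ) * P)
          (2*l+1) (by omega) (by simpa using ha) hb ?_ ?_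
      · exact this
      · have e : γ * P - 2*(((2*l+1:ℕ)):ℂ)*(P - 2*(l:ℂ)/(2*l+γ)*P)
            = γ*P*(γ-(2*(l:ℂ)+2))/(2*(l:ℂ)+γ) := by
          push_cast; field_simp; ring
        rw [e]
        exact div_ne_zero (mul_ne_zero (mul_ne_zero hγ0 hPne) hg2l2) h2l
      · push_cast
        field_simp [show 2*((l:ℂ)+1)-γ ≠ 0 from fun h => h2l2m (by linear_combination h)]
        ring
    -- step 2 : n = 2l+2
    have hf3 : f (2*l+3) = (2*(l:ℂ)+2+γ)/(2*(l:ℂ)+2-γ) * P := by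
      have := step P ((2*(l:ℂ)+2)/(2*(l:ℂ)+2-γ) * P) ((2*(l:ℂ)+2+γ)/(2*(l:ℂ)+2-γ) * P)
          (2*l+2) (by omega) (by simpa using hb) hf2 ?_ ?_
      · exact this
      · have e : γ * ((2*(l:ℂ)+2)/(2*(l:ℂ)+2-γ) * P)
            - 2*(((2*l+2:ℕ)):ℂ)*((2*(l:ℂ)+2)/(2*(l:ℂ)+2-γ) * P - P)
            = -(γ*(2*(l:ℂ)+2)*P/(2*(l:ℂ)+2-γ)) := by
          push_cast; field_simp [show 2*((l:ℂ)+1)-γ ≠ 0 from fun h => h2l2m (by linear_combination h)]; ring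
        rw [e]
        have h2 : (2*(l:ℂ)+2) ≠ 0 := by
          intro h
          have : ((l:ℂ)+1) = 0 := by linear_combination h/2
          have : ((l+1:ℕ):ℂ) = 0 := by push_cast; linear_combination this
          exact Nat.cast_ne_zero.mpr (Nat.succ_ne_zero l) this
        exact neg_ne_zero.mpr (div_ne_zero (mul_ne_zero (mul_ne_zero hγ0 h2) hPne) h2l2m)
      · push_cast
        field_simp [show 2*((l:ℂ)+1)-γ ≠ 0 from fun h => h2l2m (by linear_combination h)]
        ring
    have hprod : ∏ k ∈ Icc 1 (l+1), (2*(k:ℂ)+γ)/(2*(k:ℂ)-γ)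
        = P * ((2*((l:ℂ)+1)+γ)/(2*((l:ℂ)+1)-γ)) := by
      rw [Finset.prod_Icc_succ_top (by omega : 1 ≤ l+1)]
      push_cast
      ring
    have hidx : 2*(l+1) = 2*l+2 := by ring
    have hidx2 : 2*(l+1)+1 = 2*l+3 := by ring
    have hA : 2*((l:ℂ)+1)+γ ≠ 0 := by intro h; exact h2l2p (by linear_combination h)
    have hB : 2*((l:ℂ)+1)-γ ≠ 0 := by intro h; exact h2l2m (by linear_combination h)
    constructor
    · rw [hidx, hf2, hprod]
      push_cast
      field_simp [hA, hB, h2l2m]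
    · rw [hidx2, hf3, hprod]
      field_simp [hA, hB, h2l2m]
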